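/- Let D be a PVMD and I a packet of D, i.e., a t-invertible integral t-ideal whose radical P = √I is a prime ideal. If P has height one, then ⋂_{n≥1}(I^n)_v = (0). -/

import Mathlib

open scoped nonZeroDivisors

variable (D : Type*) [CommRing D] [IsDomain D]
variable (K : Type*) [Field K] [Algebra D K] [IsFractionRing D K]

/-- The `v`-operation: `I_v = (I⁻¹)⁻¹`, viewed as a `D`-submodule of `K`. -/
noncomputable def vSub (I : FractionalIdeal D⁰ K) : Submodule D K :=
  (((I⁻¹)⁻¹ : FractionalIdeal D⁰ K) : Submodule D K)

/-- The `t`-operation: `I_t = ⋃ {J_v : J ⊆ I nonzero finitely generated}`. -/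
noncomputable def tSub (I : FractionalIdeal D⁰ K) : Submodule D K :=
  ⨆ J : {J : FractionalIdeal D⁰ K // J ≠ 0 ∧ (J : Submodule D K).FG ∧ J ≤ I}, vSub D K J.1

/-- A fractional ideal `I` is `t`-invertible if `(I * I⁻¹)_t = D`. -/
noncomputable def IsTInvertible (I : FractionalIdeal D⁰ K) : Prop :=
  tSub D K (I * I⁻¹) = ((1 : FractionalIdeal D⁰ K) : Submodule D K)

/-- An integral ideal `I` of `D` is a `t`-ideal if `I_t = I`. -/
noncomputable def IsTIdeal (I : Ideal D) : Prop :=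
  tSub D K (I : FractionalIdeal D⁰ K) = ((I : FractionalIdeal D⁰ K) : Submodule D K)

/-- `D` is a PVMD: every nonzero finitely generated integral ideal is `t`-invertible. -/
noncomputable def IsPVMD : Prop :=
  ∀ I : Ideal D, I ≠ ⊥ → I.FG → IsTInvertible D K (I : FractionalIdeal D⁰ K)

set_option linter.unusedSectionVars false

open FractionalIdeal

theorem mem_pow_of_mem {A : FractionalIdeal D⁰ K} {a : K} (ha : a ∈ A) (m : ℕ) :
    a ^ m ∈ A ^ m := by
  induction m with
  | zero => simpa using one_mem_one D⁰
  | succ n ih => rw [pow_succ, pow_succ]; exact mul_mem_mul ih ha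

theorem pow_ne_zero_aux {A : FractionalIdeal D⁰ K} (hA : A ≠ 0) (m : ℕ) : A ^ m ≠ 0 := by
  obtain ⟨a, haA, ha0⟩ : ∃ a ∈ A, a ≠ 0 := by
    by_contra h; push_neg at h; exact hA (eq_zero_iff.mpr h)
  intro h
  have h2 := mem_pow_of_mem D K haA m
  rw [h] at h2
  exact pow_ne_zero m ha0 ((mem_zero_iff D⁰).mp h2)

theorem mul_mem_one_aux {a b : K} (ha : a ∈ (1 : FractionalIdeal D⁰ K))
    (hb : b ∈ (1 : FractionalIdeal D⁰ K)) : a * b ∈ (1 : FractionalIdeal D⁰ K) := by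
  obtain ⟨a₀, rfl⟩ := (mem_one_iff D⁰).mp ha
  obtain ⟨b₀, rfl⟩ := (mem_one_iff D⁰).mp hb
  exact (mem_one_iff D⁰).mpr ⟨a₀ * b₀, map_mul _ _ _⟩

theorem pow_le_one_aux {A : FractionalIdeal D⁰ K} (hA1 : A ≤ 1) (m : ℕ) : A ^ m ≤ 1 := by
  induction m with
  | zero => rw [pow_zero]
  | succ n ih =>
      rw [pow_succ]
      exact mul_le.mpr fun i hi j hj => mul_mem_one_aux D K (ih hi) (hA1 hj)

theorem mul_le_one_aux {A B : FractionalIdeal D⁰ K} (hA1 : A ≤ 1) (hB1 : B ≤ 1) :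
    A * B ≤ 1 :=
  mul_le.mpr fun i hi j hj => mul_mem_one_aux D K (hA1 hi) (hB1 hj)

theorem inv_ne_zero_aux {J : FractionalIdeal D⁰ K} (hJ : J ≠ 0) (hJ1 : J ≤ 1) :
    J⁻¹ ≠ 0 := by
  have h1 : (1 : K) ∈ J⁻¹ := by
    rw [inv_eq, mem_div_iff_of_ne_zero hJ]
    intro y hy
    rw [one_mul]
    exact hJ1 hy
  intro h
  rw [h] at h1
  exact one_ne_zero ((mem_zero_iff D⁰).mp h1)

theorem v_mul_aux {A B : FractionalIdeal D⁰ K} (hA : A ≠ 0) (hB : B ≠ 0)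
    (hA1 : A ≤ 1) (hB1 : B ≤ 1) : A⁻¹⁻¹ * B⁻¹⁻¹ ≤ ((A * B)⁻¹)⁻¹ := by
  obtain ⟨a, haA, ha0⟩ : ∃ a ∈ A, a ≠ 0 := by
    by_contra h; push_neg at h; exact hA (eq_zero_iff.mpr h)
  obtain ⟨b, hbB, hb0⟩ : ∃ b ∈ B, b ≠ 0 := by
    by_contra h; push_neg at h; exact hB (eq_zero_iff.mpr h)
  have hAB : A * B ≠ 0 := fun h => mul_ne_zero ha0 hb0
    ((mem_zero_iff D⁰).mp (h ▸ mul_mem_mul haA hbB))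
  have hAB1 : A * B ≤ 1 := mul_le_one_aux D K hA1 hB1
  have hAinv : A⁻¹ ≠ 0 := inv_ne_zero_aux D K hA hA1
  have hBinv : B⁻¹ ≠ 0 := inv_ne_zero_aux D K hB hB1
  have hABinv : (A * B)⁻¹ ≠ 0 := inv_ne_zero_aux D K hAB hAB1
  rw [mul_le]
  intro x hx y hy
  rw [inv_eq, mem_div_iff_of_ne_zero hABinv]
  intro h hh
  rw [inv_eq] at hh
  have hyh : y * h ∈ A⁻¹ := by
    rw [inv_eq, mem_div_iff_of_ne_zero hA]
    intro α hα
    have hhα : h * α ∈ B⁻¹ := by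
      rw [inv_eq, mem_div_iff_of_ne_zero hB]
      intro β hβ
      have := (mem_div_iff_of_ne_zero hAB).mp hh (α * β) (mul_mem_mul hα hβ)
      rwa [show h * α * β = h * (α * β) by ring]
    have := (mem_div_iff_of_ne_zero hBinv).mp (by rwa [inv_eq] at hy) (h * α) hhα
    rwa [show y * h * α = y * (h * α) by ring]
  have := (mem_div_iff_of_ne_zero hAinv).mp (by rwa [inv_eq] at hx) (y * h) hyh
  rwa [show x * y * h = x * (y * h) by ring]

theorem v_pow_aux {A : FractionalIdeal D⁰ K} (hA : A ≠ 0) (hA1 : A ≤ 1) (m : ℕ) :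
    (A⁻¹⁻¹) ^ m ≤ ((A ^ m)⁻¹)⁻¹ := by
  induction m with
  | zero => rw [pow_zero, pow_zero, inv_one, inv_one]
  | succ n ih =>
      calc (A⁻¹⁻¹) ^ (n + 1) = (A⁻¹⁻¹) ^ n * A⁻¹⁻¹ := pow_succ _ _
        _ ≤ ((A ^ n)⁻¹)⁻¹ * A⁻¹⁻¹ := mul_left_mono ih
        _ ≤ ((A ^ n * A)⁻¹)⁻¹ :=
            v_mul_aux D K (pow_ne_zero_aux D K hA n) hA (pow_le_one_aux D K hA1 n) hA1
        _ = ((A ^ (n + 1))⁻¹)⁻¹ := by rw [← pow_succ]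

theorem vSub_mono_aux {J J' : FractionalIdeal D⁰ K} (hJ : J ≠ 0) (hJ'1 : J' ≤ 1)
    (h : J ≤ J') : vSub D K J ≤ vSub D K J' := by
  have hJ' : J' ≠ 0 := fun h0 => hJ (le_antisymm (h0 ▸ h) (zero_le _))
  have hJ1 : J ≤ 1 := h.trans hJ'1
  have h1 : J'⁻¹ ≤ J⁻¹ := inv_anti_mono hJ hJ' h
  have h2 : J⁻¹⁻¹ ≤ J'⁻¹⁻¹ :=
    inv_anti_mono (inv_ne_zero_aux D K hJ' hJ'1) (inv_ne_zero_aux D K hJ hJ1) h1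
  exact coe_le_coe.mpr h2

theorem pow_mul_mem_one_aux {A : FractionalIdeal D⁰ K} (hA : A ≠ 0) {b : K}
    (hb : b ∈ A⁻¹) (n : ℕ) : ∀ y ∈ A ^ n, b ^ n * y ∈ (1 : FractionalIdeal D⁰ K) := by
  have h1 : spanSingleton D⁰ b * A ≤ 1 := by
    rw [mul_le]
    intro i hi j hj
    obtain ⟨t, ht⟩ := (mem_spanSingleton D⁰).mp hi
    have hbj : b * j ∈ (1 : FractionalIdeal D⁰ K) :=
      (mem_div_iff_of_ne_zero hA).mp (by rwa [inv_eq] at hb) j hj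
    obtain ⟨c, hc⟩ := (mem_one_iff D⁰).mp hbj
    refine (mem_one_iff D⁰).mpr ⟨t * c, ?_⟩
    rw [← ht, _root_.map_mul, hc, smul_mul_assoc, Algebra.smul_def]
  have h2 : (spanSingleton D⁰ b) ^ n * A ^ n ≤ 1 := by
    rw [← mul_pow]
    exact pow_le_one_aux D K h1 n
  intro y hy
  exact h2 (mul_mem_mul (mem_pow_of_mem D K (mem_spanSingleton_self D⁰ b) n) hy)

theorem not_le_radical (I : Ideal D)
    (hIt : tSub D K (I : FractionalIdeal D⁰ K) = ((I : FractionalIdeal D⁰ K) : Submodule D K))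
    (hrad : I.radical.IsPrime)
    {G : FractionalIdeal D⁰ K}
    (hG : tSub D K G = ((1 : FractionalIdeal D⁰ K) : Submodule D K)) :
    ¬ G ≤ (I.radical : FractionalIdeal D⁰ K) := by
  intro hle
  have hG1 : G ≤ 1 := le_trans hle coeIdeal_le_one
  have h1 : (1 : K) ∈ tSub D K G := by rw [hG]; exact mem_coe.mpr (one_mem_one D⁰)
  unfold tSub at h1
  have hne : Nonempty {J : FractionalIdeal D⁰ K // J ≠ 0 ∧ (J : Submodule D K).FG ∧ J ≤ G} := by
    by_contra hno
    rw [not_nonempty_iff] at hno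
    rw [iSup_of_empty] at h1
    exact one_ne_zero ((Submodule.mem_bot D).mp h1)
  have hdir : Directed (· ≤ ·)
      (fun J : {J : FractionalIdeal D⁰ K // J ≠ 0 ∧ (J : Submodule D K).FG ∧ J ≤ G} =>
        vSub D K J.1) := by
    rintro ⟨J₁, hJ₁0, hJ₁fg, hJ₁le⟩ ⟨J₂, hJ₂0, hJ₂fg, hJ₂le⟩
    have hsup1 : J₁ ⊔ J₂ ≤ 1 := (sup_le hJ₁le hJ₂le).trans hG1
    refine ⟨⟨J₁ ⊔ J₂, fun h => hJ₁0 (le_antisymm (h ▸ le_sup_left) (zero_le _)),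
      by rw [coe_sup]; exact hJ₁fg.sup hJ₂fg, sup_le hJ₁le hJ₂le⟩, ?_, ?_⟩
    · exact vSub_mono_aux D K hJ₁0 hsup1 le_sup_left
    · exact vSub_mono_aux D K hJ₂0 hsup1 le_sup_right
  obtain ⟨⟨J, hJ0, hJfg, hJle⟩, hmem⟩ := (Submodule.mem_iSup_of_directed _ hdir).mp h1
  have hJ1 : J ≤ 1 := hJle.trans hG1
  obtain ⟨J₀, rfl⟩ := le_one_iff_exists_coeIdeal.mp hJ1
  have hJ₀P : J₀ ≤ I.radical := (coeIdeal_le_coeIdeal K).mp (hJle.trans hle)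
  have hJ₀0 : J₀ ≠ ⊥ := (coeIdeal_ne_zero' le_rfl).mp hJ0
  have hcoe : ∀ A : Ideal D, ((A : FractionalIdeal D⁰ K) : Submodule D K)
      = Submodule.map (Algebra.linearMap D K) A := fun A => rfl
  have hJ₀fg : J₀.FG := by
    apply Submodule.fg_of_fg_map_injective (Algebra.linearMap D K)
      (IsFractionRing.injective D K)
    rwa [hcoe] at hJfg
  obtain ⟨m, hm⟩ := Ideal.exists_pow_le_of_le_radical_of_fg hJ₀P hJ₀fg
  have h1J : (1 : K) ∈ (((J₀ : FractionalIdeal D⁰ K))⁻¹⁻¹) := mem_coe.mp hmem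
  have h1Jm : (1 : K) ∈ ((((J₀ ^ m : Ideal D) : FractionalIdeal D⁰ K))⁻¹⁻¹) := by
    have h2 := mem_pow_of_mem D K h1J m
    rw [one_pow] at h2
    have h3 := v_pow_aux D K hJ0 hJ1 m h2
    rwa [coeIdeal_pow]
  obtain ⟨x, hxJ, hx0⟩ := Submodule.exists_mem_ne_zero_of_ne_bot hJ₀0
  have hJm0 : (J₀ ^ m : Ideal D) ≠ ⊥ := fun h => pow_ne_zero m hx0 (by
    have := Ideal.pow_mem_pow hxJ m
    rwa [h, Ideal.mem_bot] at this)
  have hsub : vSub D K ((J₀ ^ m : Ideal D) : FractionalIdeal D⁰ K)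
      ≤ tSub D K (I : FractionalIdeal D⁰ K) := by
    refine le_iSup (fun J : {J : FractionalIdeal D⁰ K //
        J ≠ 0 ∧ (J : Submodule D K).FG ∧ J ≤ (I : FractionalIdeal D⁰ K)} => vSub D K J.1)
      ⟨((J₀ ^ m : Ideal D) : FractionalIdeal D⁰ K), ?_, ?_, ?_⟩
    · exact (coeIdeal_ne_zero' le_rfl).mpr hJm0
    · rw [hcoe]
      exact (Submodule.FG.pow hJ₀fg m).map _
    · exact (coeIdeal_le_coeIdeal K).mpr hm
  rw [hIt] at hsub
  have h1I : (1 : K) ∈ (I : FractionalIdeal D⁰ K) := by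
    refine mem_coe.mp (hsub ?_)
    show (1 : K) ∈ vSub D K ((J₀ ^ m : Ideal D) : FractionalIdeal D⁰ K)
    exact mem_coe.mpr h1Jm
  obtain ⟨o, hoI, ho⟩ := (mem_coeIdeal D⁰).mp h1I
  have ho1 : o = 1 := IsFractionRing.injective D K (by rw [ho, _root_.map_one])
  refine hrad.ne_top (top_le_iff.mp ?_)
  calc (⊤ : Ideal D) = I := ((Ideal.eq_top_iff_one I).mpr (ho1 ▸ hoI)).symm
    _ ≤ I.radical := Ideal.le_radical

theorem exists_elem (I : Ideal D)
    (hIt : tSub D K (I : FractionalIdeal D⁰ K) = ((I : FractionalIdeal D⁰ K) : Submodule D K))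
    (hrad : I.radical.IsPrime) (F₀ : Ideal D)
    (hT : tSub D K ((F₀ : FractionalIdeal D⁰ K) * (F₀ : FractionalIdeal D⁰ K)⁻¹)
      = ((1 : FractionalIdeal D⁰ K) : Submodule D K)) :
    ∃ a₀ ∈ F₀, ∃ b ∈ ((F₀ : FractionalIdeal D⁰ K)⁻¹), ∃ u : D, u ∉ I.radical ∧
      algebraMap D K u = algebraMap D K a₀ * b := by
  have hnot := not_le_radical D K I hIt hrad hT
  have hex : ¬ ∀ a ∈ (F₀ : FractionalIdeal D⁰ K), ∀ b ∈ (F₀ : FractionalIdeal D⁰ K)⁻¹,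
      a * b ∈ ((I.radical : Ideal D) : FractionalIdeal D⁰ K) := fun h => hnot (mul_le.mpr h)
  push_neg at hex
  obtain ⟨a, ha, b, hb, hab⟩ := hex
  obtain ⟨a₀, ha₀, rfl⟩ := (mem_coeIdeal D⁰).mp ha
  have h1 : algebraMap D K a₀ * b ∈ (1 : FractionalIdeal D⁰ K) := by
    have hle1 : (F₀ : FractionalIdeal D⁰ K) * (F₀ : FractionalIdeal D⁰ K)⁻¹ ≤ 1 := by
      rw [inv_eq]; exact mul_one_div_le_one
    exact hle1 (mul_mem_mul ha hb)
  obtain ⟨u, hu⟩ := (mem_one_iff D⁰).mp h1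
  exact ⟨a₀, ha₀, b, hb, u, fun huP => hab (hu ▸ (mem_coeIdeal D⁰).mpr ⟨u, huP, rfl⟩), hu⟩

theorem pair_div (hD : IsPVMD D K) (I : Ideal D)
    (hIt : tSub D K (I : FractionalIdeal D⁰ K) = ((I : FractionalIdeal D⁰ K) : Submodule D K))
    (hrad : I.radical.IsPrime) {x y : D} (hx : x ≠ 0) (hy : y ≠ 0) :
    (∃ d s, s ∉ I.radical ∧ y * s = x * d) ∨ (∃ d s, s ∉ I.radical ∧ x * s = y * d) := by
  have inj := IsFractionRing.injective D K
  set F₀ : Ideal D := Ideal.span {x, y} with hF₀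
  have hxF : x ∈ F₀ := Ideal.subset_span (by simp)
  have hyF : y ∈ F₀ := Ideal.subset_span (by simp)
  have hF0 : F₀ ≠ ⊥ := fun h => hx (by rw [h, Ideal.mem_bot] at hxF; exact hxF)
  have hFfg : F₀.FG := by
    classical
    exact ⟨({x, y} : Finset D), by simp [hF₀]⟩
  have hT := hD F₀ hF0 hFfg
  obtain ⟨a₀, ha₀, b, hb, u, huP, hu⟩ := exists_elem D K I hIt hrad F₀ hT
  have hu0 : u ≠ 0 := fun h => huP (h ▸ I.radical.zero_mem)
  have ha0 : a₀ ≠ 0 := fun h => hu0 (inj (by rw [hu, h]; simp))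
  have hFinv1 : (F₀ : FractionalIdeal D⁰ K) * (F₀ : FractionalIdeal D⁰ K)⁻¹ ≤ 1 := by
    rw [inv_eq]; exact mul_one_div_le_one
  obtain ⟨e₁, he₁⟩ := (mem_one_iff D⁰).mp
    (hFinv1 (mul_mem_mul ((mem_coeIdeal D⁰).mpr ⟨x, hxF, rfl⟩) hb))
  obtain ⟨e₂, he₂⟩ := (mem_one_iff D⁰).mp
    (hFinv1 (mul_mem_mul ((mem_coeIdeal D⁰).mpr ⟨y, hyF, rfl⟩) hb))
  have hxu : x * u = a₀ * e₁ := by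
    apply inj
    rw [_root_.map_mul, _root_.map_mul, hu, he₁]
    ring
  have hyu : y * u = a₀ * e₂ := by
    apply inj
    rw [_root_.map_mul, _root_.map_mul, hu, he₂]
    ring
  obtain ⟨r, s', hrs⟩ := Ideal.mem_span_pair.mp ha₀
  have hueq : u = r * e₁ + s' * e₂ := by
    have hcalc : a₀ * u = a₀ * (r * e₁ + s' * e₂) := by
      calc a₀ * u = r * (x * u) + s' * (y * u) := by rw [← hrs]; ring
        _ = a₀ * (r * e₁ + s' * e₂) := by rw [hxu, hyu]; ring
    exact mul_left_cancel₀ ha0 hcalc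
  have he12 : e₁ ∉ I.radical ∨ e₂ ∉ I.radical := by
    by_contra h
    push_neg at h
    exact huP (hueq ▸ I.radical.add_mem (I.radical.mul_mem_left r h.1)
      (I.radical.mul_mem_left s' h.2))
  have hkey : y * e₁ = x * e₂ := by
    have hcalc : (y * e₁) * u = (x * e₂) * u := by
      calc (y * e₁) * u = e₁ * (y * u) := by ring
        _ = e₁ * (a₀ * e₂) := by rw [hyu]
        _ = e₂ * (a₀ * e₁) := by ring
        _ = e₂ * (x * u) := by rw [hxu]
        _ = (x * e₂) * u := by ring
    exact mul_right_cancel₀ hu0 hcalc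
  rcases he12 with h | h
  · exact Or.inl ⟨e₂, e₁, h, hkey⟩
  · exact Or.inr ⟨e₁, e₂, h, hkey.symm⟩

/-- Let `D` be a PVMD and `I` a packet of `D`: a `t`-invertible integral `t`-ideal whose
radical `P = √I` is prime. If `P` has height one, then `⋂_{n ≥ 1} (I^n)_v = (0)`. -/
theorem stmt_14 (hD : IsPVMD D K) (I : Ideal D)
    (hIt : tSub D K (I : FractionalIdeal D⁰ K) = ((I : FractionalIdeal D⁰ K) : Submodule D K))
    (hInv : IsTInvertible D K (I : FractionalIdeal D⁰ K))
    (hrad : I.radical.IsPrime)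
    (hht0 : I.radical ≠ ⊥)
    (hht1 : ∀ Q : Ideal D, Q.IsPrime → Q < I.radical → Q = ⊥) :
    (⨅ (n : ℕ) (_ : 1 ≤ n), vSub D K ((I : FractionalIdeal D⁰ K) ^ n)) = ⊥ := by
  have inj := IsFractionRing.injective D K
  have h1P : (1 : D) ∉ I.radical := (Ideal.ne_top_iff_one I.radical).mp hrad.ne_top
  obtain ⟨a₀, ha₀I, b, hb, u, huP, hu⟩ := exists_elem D K I hIt hrad I hInv
  have hu0 : u ≠ 0 := fun h => huP (h ▸ I.radical.zero_mem)
  have ha0 : a₀ ≠ 0 := fun h => hu0 (inj (by rw [hu, h]; simp))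
  have hb0 : b ≠ 0 := fun h => hu0 (inj (by rw [hu, h]; simp))
  have haP : a₀ ∈ I.radical := Ideal.le_radical ha₀I
  have hI0 : I ≠ ⊥ := fun h => ha0 (by rwa [h, Ideal.mem_bot] at ha₀I)
  have hG0 : (I : FractionalIdeal D⁰ K) ≠ 0 := (coeIdeal_ne_zero' le_rfl).mpr hI0
  have hG1 : (I : FractionalIdeal D⁰ K) ≤ 1 := coeIdeal_le_one
  -- the ideal Q
  let QP : D → Prop := fun z => ∀ m : ℕ, ∃ d s : D, s ∉ I.radical ∧ z * s = a₀ ^ m * d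
  have hQ0 : QP 0 := fun m => ⟨0, 1, h1P, by ring⟩
  let Q : Ideal D :=
    { carrier := {z | QP z}
      add_mem' := by
        rintro z w hz hw m
        obtain ⟨d, s, hs, hzs⟩ := hz m
        obtain ⟨d', s', hs', hws⟩ := hw m
        refine ⟨d * s' + d' * s, s * s', fun hss => (hrad.mem_or_mem hss).elim hs hs', ?_⟩
        linear_combination s' * hzs + s * hws
      zero_mem' := hQ0
      smul_mem' := by
        rintro c z hz m
        obtain ⟨d, s, hs, hzs⟩ := hz m
        refine ⟨c * d, s, hs, ?_⟩
        simp only [smul_eq_mul]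
        linear_combination c * hzs }
  have hmemQ : ∀ z : D, z ∈ Q ↔ QP z := fun z => Iff.rfl
  have hQP : Q ≤ I.radical := by
    intro z hz
    obtain ⟨d, s, hs, hzs⟩ := (hmemQ z).mp hz 1
    have hzsP : z * s ∈ I.radical := by
      rw [hzs, pow_one]
      exact Ideal.mul_mem_right _ _ haP
    exact (hrad.mem_or_mem hzsP).resolve_right hs
  have haQ : a₀ ∉ Q := by
    intro hmem
    obtain ⟨d, s, hs, hzs⟩ := (hmemQ a₀).mp hmem 2
    apply hs
    have : s = a₀ * d := mul_left_cancel₀ ha0 (by linear_combination hzs)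
    rw [this]
    exact Ideal.mul_mem_right _ _ haP
  have hQprime : Q.IsPrime := by
    constructor
    · intro htop
      have h1Q : (1 : D) ∈ Q := htop ▸ Submodule.mem_top
      obtain ⟨d, s, hs, hzs⟩ := (hmemQ 1).mp h1Q 1
      apply hs
      have : s = a₀ * d := by linear_combination hzs
      rw [this]
      exact Ideal.mul_mem_right _ _ haP
    · intro z w hzw
      by_contra hcon
      push_neg at hcon
      obtain ⟨hz, hw⟩ := hcon
      have hz' : ¬ ∀ m : ℕ, ∃ d s : D, s ∉ I.radical ∧ z * s = a₀ ^ m * d :=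
        fun h => hz ((hmemQ z).mpr h)
      have hw' : ¬ ∀ m : ℕ, ∃ d s : D, s ∉ I.radical ∧ w * s = a₀ ^ m * d :=
        fun h => hw ((hmemQ w).mpr h)
      have hz0 : z ≠ 0 := fun h => hz' (h ▸ hQ0)
      have hw0 : w ≠ 0 := fun h => hw' (h ▸ hQ0)
      push_neg at hz' hw'
      obtain ⟨k, hk⟩ := hz'
      obtain ⟨l, hl⟩ := hw'
      have hzk : ∃ d s, s ∉ I.radical ∧ a₀ ^ k * s = z * d := by
        rcases pair_div D K hD I hIt hrad hz0 (pow_ne_zero k ha0) with h | h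
        · exact h
        · obtain ⟨d, s, hs, heq⟩ := h
          exact absurd heq (hk d s hs)
      have hwl : ∃ d s, s ∉ I.radical ∧ a₀ ^ l * s = w * d := by
        rcases pair_div D K hD I hIt hrad hw0 (pow_ne_zero l ha0) with h | h
        · exact h
        · obtain ⟨d, s, hs, heq⟩ := h
          exact absurd heq (hl d s hs)
      obtain ⟨d₁, s₁, hs₁, h₁⟩ := hzk
      obtain ⟨d₂, s₂, hs₂, h₂⟩ := hwl
      obtain ⟨e, t, ht, he⟩ := (hmemQ (z * w)).mp hzw (k + l + 1)
      have hcancel : s₁ * s₂ * t = a₀ * (e * d₁ * d₂) := by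
        apply mul_left_cancel₀ (pow_ne_zero (k + l) ha0)
        linear_combination (a₀ ^ l * s₂ * t) * h₁ + (z * d₁ * t) * h₂ + (d₁ * d₂) * he
      have hmemP : s₁ * s₂ * t ∈ I.radical := by
        rw [hcancel]
        exact Ideal.mul_mem_right _ _ haP
      rcases hrad.mem_or_mem hmemP with h | h
      · rcases hrad.mem_or_mem h with h' | h'
        · exact hs₁ h'
        · exact hs₂ h'
      · exact ht h
  have hQlt : Q < I.radical := lt_of_le_of_ne hQP (fun h => haQ (h ▸ haP))
  have hQbot : Q = ⊥ := hht1 Q hQprime hQlt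
  -- conclude
  refine (Submodule.eq_bot_iff _).mpr fun z hz => ?_
  have hzn : ∀ n : ℕ, 1 ≤ n → z ∈ vSub D K ((I : FractionalIdeal D⁰ K) ^ n) := by
    intro n hn
    exact (Submodule.mem_iInf _).mp ((Submodule.mem_iInf _).mp hz n) hn
  have hdn : ∀ n : ℕ, 1 ≤ n → ∃ d : D, algebraMap D K d = z * b ^ n := by
    intro n hn
    have h1 : z ∈ (((I : FractionalIdeal D⁰ K) ^ n)⁻¹⁻¹ : FractionalIdeal D⁰ K) :=
      mem_coe.mp (hzn n hn)
    have hGn0 : (I : FractionalIdeal D⁰ K) ^ n ≠ 0 := pow_ne_zero_aux D K hG0 n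
    have hGninv : ((I : FractionalIdeal D⁰ K) ^ n)⁻¹ ≠ 0 :=
      inv_ne_zero_aux D K hGn0 (pow_le_one_aux D K hG1 n)
    have hbn : b ^ n ∈ ((I : FractionalIdeal D⁰ K) ^ n)⁻¹ := by
      rw [inv_eq, mem_div_iff_of_ne_zero hGn0]
      exact pow_mul_mem_one_aux D K hG0 hb n
    rw [inv_eq] at h1
    have hz1 := (mem_div_iff_of_ne_zero hGninv).mp h1 (b ^ n) hbn
    obtain ⟨d, hd⟩ := (mem_one_iff D⁰).mp hz1
    exact ⟨d, hd⟩
  obtain ⟨y₀, hy₀⟩ := hdn 1 le_rfl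
  rw [pow_one] at hy₀
  have hy₀Q : y₀ ∈ Q := by
    rw [hmemQ]
    intro m
    obtain ⟨d, hd⟩ := hdn (m + 1) (Nat.le_add_left 1 m)
    refine ⟨d, u ^ m, fun h => huP (hrad.mem_of_pow_mem m h), ?_⟩
    apply inj
    rw [_root_.map_mul, _root_.map_mul, map_pow, map_pow, hy₀, hu, hd]
    ring
  have hy₀0 : y₀ = 0 := by rwa [hQbot, Ideal.mem_bot] at hy₀Q
  have : z * b = 0 := by rw [← hy₀, hy₀0, _root_.map_zero]
  rcases mul_eq_zero.mp this with h | h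
  · exact h
  · exact absurd h hb0
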